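/- Under Assumption 1, for every h ∈ (0,H) there exists h_o ∈ (0,h] such that no point strictly below the height h_o can be trapped below the minimum observable height line z = h: for every δ with 0 < δ < R/2 and δ < h, every characteristic curve c : [0,∞) → ℝ² satisfying c(t) ∈ [δ, R−δ] × [δ, h] for all t ≥ 0 must have second coordinate c(0).2 ≥ h_o. (This is the paper's Theorem 1: there is a nontrivial surface layer 0 < z < h_o all of whose points lie on characteristic curves that escape to the observable region z ≥ h or exit the domain.) -/

import Mathlib

open Set Filter Topology


/-- If `f` has derivative `≥ ε > 0` on `[T,∞)` but is bounded above, contradiction. -/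
lemma escape_up {f df : ℝ → ℝ} {T ε M : ℝ} (hε : 0 < ε)
    (hf : ∀ t ∈ Ici T, HasDerivWithinAt f (df t) (Ici T) t)
    (hdf : ∀ t ∈ Ici T, ε ≤ df t)
    (hM : ∀ t ∈ Ici T, f t ≤ M) : False := by
  have hder : ∀ x ∈ Ioi T, HasDerivAt (fun t => f t - ε * t) (df x - ε) x := by
    intro x hx
    have h1 : HasDerivAt f (df x) x := (hf x (mem_Ici.mpr (le_of_lt (mem_Ioi.mp hx)))).hasDerivAt (Ici_mem_nhds hx)
    have h2 : HasDerivAt (fun t : ℝ => ε * t) ε x := by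
      simpa using (hasDerivAt_id x).const_mul ε
    exact h1.sub h2
  have hc : ContinuousOn (fun t => f t - ε * t) (Ici T) := by
    intro t ht
    exact ((hf t ht).continuousWithinAt).sub ((continuous_const.mul continuous_id).continuousWithinAt)
  have hmono : MonotoneOn (fun t => f t - ε * t) (Ici T) := by
    apply monotoneOn_of_deriv_nonneg (convex_Ici T) hc
    · intro x hx
      rw [interior_Ici] at hx
      exact (hder x hx).differentiableAt.differentiableWithinAt
    · intro x hx
      rw [interior_Ici] at hx
      rw [(hder x hx).deriv]
      linarith [hdf x (mem_Ici.mpr (le_of_lt (mem_Ioi.mp hx)))]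
  set t := T + (M - f T) / ε + 1 with ht_def
  have hfTM : f T ≤ M := hM T (mem_Ici.mpr le_rfl)
  have hq : 0 ≤ (M - f T) / ε := div_nonneg (by linarith) hε.le
  have hTt : T ≤ t := by rw [ht_def]; linarith
  have := hmono (self_mem_Ici) (mem_Ici.mpr hTt) hTt
  have hft : f t ≤ M := hM t (mem_Ici.mpr hTt)
  have hεt : ε * t = ε * T + (M - f T) + ε := by
    rw [ht_def]; field_simp
  simp only at this
  linarith

lemma escape_down {f df : ℝ → ℝ} {T ε m : ℝ} (hε : 0 < ε)
    (hf : ∀ t ∈ Ici T, HasDerivWithinAt f (df t) (Ici T) t)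
    (hdf : ∀ t ∈ Ici T, df t ≤ -ε)
    (hm : ∀ t ∈ Ici T, m ≤ f t) : False := by
  refine escape_up (f := fun t => -f t) (df := fun t => -df t) (T := T) (M := -m) hε
    (fun t ht => (hf t ht).neg) (fun t ht => by show ε ≤ -df t; linarith [hdf t ht])
    (fun t ht => by show -f t ≤ -m; linarith [hm t ht])

/-- Monotone on a convex `D ⊆ [0,∞)` with `interior D ⊆ (0,∞)` from a nonneg field. -/
lemma monoOn_of_field {c df : ℝ → ℝ} {D : Set ℝ} (hD : Convex ℝ D)
    (hint : interior D ⊆ Ioi (0:ℝ)) (hsub : D ⊆ Ici (0:ℝ))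
    (hder : ∀ t ∈ Ici (0:ℝ), HasDerivWithinAt c (df t) (Ici 0) t)
    (hsign : ∀ t ∈ interior D, 0 ≤ df t) : MonotoneOn c D := by
  have hda : ∀ x ∈ interior D, HasDerivAt c (df x) x := fun x hx =>
    (hder x (mem_Ici.mpr (le_of_lt (mem_Ioi.mp (hint hx))))).hasDerivAt (Ici_mem_nhds (hint hx))
  apply monotoneOn_of_deriv_nonneg hD
  · exact fun t ht => ((hder t (hsub ht)).continuousWithinAt).mono hsub
  · exact fun x hx => (hda x hx).differentiableAt.differentiableWithinAt
  · intro x hx; rw [(hda x hx).deriv]; exact hsign x hx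

lemma antiOn_of_field {c df : ℝ → ℝ} {D : Set ℝ} (hD : Convex ℝ D)
    (hint : interior D ⊆ Ioi (0:ℝ)) (hsub : D ⊆ Ici (0:ℝ))
    (hder : ∀ t ∈ Ici (0:ℝ), HasDerivWithinAt c (df t) (Ici 0) t)
    (hsign : ∀ t ∈ interior D, df t ≤ 0) : AntitoneOn c D := by
  have hda : ∀ x ∈ interior D, HasDerivAt c (df x) x := fun x hx =>
    (hder x (mem_Ici.mpr (le_of_lt (mem_Ioi.mp (hint hx))))).hasDerivAt (Ici_mem_nhds (hint hx))
  apply antitoneOn_of_deriv_nonpos hD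
  · exact fun t ht => ((hder t (hsub ht)).continuousWithinAt).mono hsub
  · exact fun x hx => (hda x hx).differentiableAt.differentiableWithinAt
  · intro x hx; rw [(hda x hx).deriv]; exact hsign x hx

/-- Positive right derivative implies locally greater on the right. -/
lemma eventually_gt_right {f : ℝ → ℝ} {τ d : ℝ} (hd : 0 < d)
    (hf : HasDerivWithinAt f d (Ici τ) τ) : ∀ᶠ t in 𝓝[>] τ, f τ < f t := by
  have hs := hasDerivWithinAt_iff_tendsto_slope.mp hf
  rw [show Ici τ \ {τ} = Ioi τ from Ici_sdiff_left] at hs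
  have hev : ∀ᶠ t in 𝓝[>] τ, 0 < slope f τ t := hs (Ioi_mem_nhds hd)
  filter_upwards [hev, self_mem_nhdsWithin] with t ht h't
  have htτ : (0:ℝ) < t - τ := by simp only [mem_Ioi] at h't; linarith
  rw [slope_def_field] at ht
  have := mul_pos ht htτ
  rw [div_mul_cancel₀] at this
  · linarith
  · exact ne_of_gt htτ

/-- An antitone-on-`[T,∞)` bounded-below function converges at `atTop`. -/
lemma tendsto_of_antitoneOn {f : ℝ → ℝ} {T m : ℝ}
    (hf : AntitoneOn f (Ici T)) (hm : ∀ t ∈ Ici T, m ≤ f t) :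
    ∃ L, Tendsto f atTop (𝓝 L) := by
  have ha : Antitone (fun t => f (max t T)) := fun s t hst =>
    hf (mem_Ici.mpr (le_max_right s T)) (mem_Ici.mpr (le_max_right t T))
      (max_le_max hst le_rfl)
  have hb : BddBelow (range fun t => f (max t T)) := by
    refine ⟨m, ?_⟩
    rintro y ⟨t, rfl⟩
    exact hm _ (mem_Ici.mpr (le_max_right t T))
  refine ⟨_, (tendsto_atTop_ciInf ha hb).congr' ?_⟩
  filter_upwards [eventually_ge_atTop T] with t ht
  simp [max_eq_left ht]

lemma tendsto_of_monotoneOn {f : ℝ → ℝ} {T M : ℝ}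
    (hf : MonotoneOn f (Ici T)) (hM : ∀ t ∈ Ici T, f t ≤ M) :
    ∃ L, Tendsto f atTop (𝓝 L) := by
  obtain ⟨L, hL⟩ := tendsto_of_antitoneOn (f := fun t => -f t) (m := -M)
    (fun s hs t ht hst => by simpa using hf hs ht hst)
    (fun t ht => by simpa using hM t ht)
  exact ⟨-L, by simpa using hL.neg⟩

/-- A continuous nonvanishing function on an interval keeps its sign. -/
lemma pos_on_Ioo {F : ℝ → ℝ} {α β x₀ : ℝ} (hF : Continuous F)
    (hne : ∀ y ∈ Ioo α β, F y ≠ 0) (hx₀ : x₀ ∈ Ioo α β) (hpos : 0 < F x₀) :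
    ∀ x ∈ Ioo α β, 0 < F x := by
  intro x hx
  rcases (hne x hx).lt_or_gt with hneg | hp
  · exfalso
    have hsub : uIcc x x₀ ⊆ Ioo α β := (ordConnected_Ioo).uIcc_subset hx hx₀
    have h0 : (0:ℝ) ∈ uIcc (F x) (F x₀) := by
      rw [mem_uIcc]; exact Or.inl ⟨hneg.le, hpos.le⟩
    obtain ⟨y, hy, hy0⟩ := intermediate_value_uIcc (hF.continuousOn) h0
    exact hne y (hsub hy) hy0
  · exact hp

/-- Circulation `Γ(r,z) = r·φ(r)·ψ(z)`. -/
noncomputable def circ (φ ψ : ℝ → ℝ) (p : ℝ × ℝ) : ℝ := p.1 * φ p.1 * ψ p.2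

/-- Vertical vorticity `ζ(r,z) = g'(r)·ψ(z)/r` where `g(r) = r·φ(r)`. -/
noncomputable def zeta (φ ψ : ℝ → ℝ) (r z : ℝ) : ℝ :=
  deriv (fun s => s * φ s) r * ψ z / r

/-- Radial vorticity `η(r,z) = −φ(r)·ψ'(z)`. -/
noncomputable def eta (φ ψ : ℝ → ℝ) (r z : ℝ) : ℝ := -(φ r * deriv ψ z)

/-- A characteristic curve on an interval `I`: a differentiable curve
`c(t) = (r(t), z(t))` with `r(t) > 0` satisfying `r' = η(r,z)`, `z' = ζ(r,z)` on `I`. -/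
def IsCharCurve (φ ψ : ℝ → ℝ) (I : Set ℝ) (c : ℝ → ℝ × ℝ) : Prop :=
  (∀ t ∈ I, 0 < (c t).1) ∧
  ∀ t ∈ I,
    HasDerivWithinAt c
      (eta φ ψ (c t).1 (c t).2, zeta φ ψ (c t).1 (c t).2) I t

/-- **Theorem 1 (nontrivial retrievable surface layer).** Under Assumption 1, for every
minimum observable height `h ∈ (0,H)` there is an `h_o ∈ (0,h]` such that no point with
height strictly below `h_o` can lie on a characteristic curve that remains trapped in
`[δ, R−δ] × [δ, h]` for all forward time: any such trapped curve starts at height `≥ h_o`. -/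
theorem nontrivial_surface_layer
    (R H : ℝ) (hR : 0 < R) (hH : 0 < H)
    (φ ψ : ℝ → ℝ)
    (hφC2 : ContDiff ℝ 2 φ) (hψC2 : ContDiff ℝ 2 ψ)
    (hφ0 : φ 0 = 0) (hψ0 : ψ 0 = 0)
    (hφpos : ∀ r ∈ Ioo (0:ℝ) R, 0 < φ r)
    (hψpos : ∀ z ∈ Ioo (0:ℝ) H, 0 < ψ z)
    (r_o : ℝ) (hro : r_o ∈ Ioo (0:ℝ) R)
    (z_o : ℝ) (hzo : z_o ∈ Ioo (0:ℝ) H)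
    (hg'ro : deriv (fun s => s * φ s) r_o = 0)
    (hg'ne : ∀ r ∈ Ioo (0:ℝ) R, r ≠ r_o → deriv (fun s => s * φ s) r ≠ 0)
    (hψ'zo : deriv ψ z_o = 0)
    (hψ'ne : ∀ z ∈ Ioo (0:ℝ) H, z ≠ z_o → deriv ψ z ≠ 0)
    (hgmax : ∀ r ∈ Ioo (0:ℝ) R, r * φ r ≤ r_o * φ r_o)
    (hψmax : ∀ z ∈ Ioo (0:ℝ) H, ψ z ≤ ψ z_o)
    (h : ℝ) (hh : h ∈ Ioo (0:ℝ) H) :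
    ∃ h_o ∈ Ioc (0:ℝ) h,
      ∀ δ : ℝ, 0 < δ → δ < R / 2 → δ < h →
        ∀ c : ℝ → ℝ × ℝ, IsCharCurve φ ψ (Ici 0) c →
          (∀ t ∈ Ici (0:ℝ), c t ∈ Icc δ (R - δ) ×ˢ Icc δ h) →
          h_o ≤ (c 0).2 := by
  obtain ⟨hro0, hroR⟩ := hro
  obtain ⟨hzo0, hzoH⟩ := hzo
  obtain ⟨hh0, hhH⟩ := hh
  set g : ℝ → ℝ := fun s => s * φ s with hg_def
  have hg_eq : ∀ x, g x = x * φ x := fun x => rfl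
  have hgC2 : ContDiff ℝ 2 g := contDiff_id.mul hφC2
  have hgdiff : Differentiable ℝ g := hgC2.differentiable (by norm_num)
  have hψdiff : Differentiable ℝ ψ := hψC2.differentiable (by norm_num)
  have hgcont : Continuous g := hgC2.continuous
  have hψcont : Continuous ψ := hψC2.continuous
  have hφcont : Continuous φ := hφC2.continuous
  have hg'cont : Continuous (deriv g) := hgC2.continuous_deriv (by norm_num)
  have hψ'cont : Continuous (deriv ψ) := hψC2.continuous_deriv (by norm_num)
  have hgpos : ∀ s ∈ Ioo (0:ℝ) R, 0 < g s := fun s hs => mul_pos hs.1 (hφpos s hs)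
  have hg0 : g 0 = 0 := by simp [hg_eq]
  -- ψ' > 0 on (0, z_o)
  have hψ'pos : ∀ y ∈ Ioo 0 z_o, 0 < deriv ψ y := by
    obtain ⟨ξ, hξ, hξeq⟩ := exists_hasDerivAt_eq_slope ψ (deriv ψ) hzo0
      hψcont.continuousOn (fun x _ => (hψdiff x).hasDerivAt)
    have hξpos : 0 < deriv ψ ξ := by
      rw [hξeq, hψ0]
      exact div_pos (by simpa using hψpos z_o ⟨hzo0, hzoH⟩) (by simpa using hzo0)
    exact pos_on_Ioo hψ'cont
      (fun y hy => hψ'ne y ⟨hy.1, hy.2.trans hzoH⟩ (ne_of_lt hy.2)) hξ hξpos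
  -- ψ < ψ z_o on (z_o, H)
  have hψlt : ∀ w ∈ Ioo z_o H, ψ w < ψ z_o := by
    intro w hw
    rcases lt_or_eq_of_le (hψmax w ⟨hzo0.trans hw.1, hw.2⟩) with h' | h'
    · exact h'
    · exfalso
      have hmax : IsLocalMax ψ w := by
        filter_upwards [IsOpen.mem_nhds isOpen_Ioo (⟨hzo0.trans hw.1, hw.2⟩ :
          w ∈ Ioo (0:ℝ) H)] with y hy
        rw [h']
        exact hψmax y hy
      exact hψ'ne w ⟨hzo0.trans hw.1, hw.2⟩ (ne_of_gt hw.1) hmax.deriv_eq_zero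
  -- ψ' < 0 on (z_o, H)
  have hψ'neg : ∀ y ∈ Ioo z_o H, deriv ψ y < 0 := by
    have hwmem : (z_o + H) / 2 ∈ Ioo z_o H := ⟨by linarith, by linarith⟩
    obtain ⟨ξ, hξ, hξeq⟩ := exists_hasDerivAt_eq_slope ψ (deriv ψ) hwmem.1
      hψcont.continuousOn (fun x _ => (hψdiff x).hasDerivAt)
    have hξneg : deriv ψ ξ < 0 := by
      rw [hξeq]
      apply div_neg_of_neg_of_pos
      · linarith [hψlt _ hwmem]
      · linarith [hwmem.1]
    have hξ' : ξ ∈ Ioo z_o H := ⟨hξ.1, hξ.2.trans hwmem.2⟩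
    intro y hy
    have := pos_on_Ioo (F := fun y => -deriv ψ y) hψ'cont.neg
      (fun y hy => by
        simpa using hψ'ne y ⟨hzo0.trans hy.1, hy.2⟩ (ne_of_gt hy.1)) hξ'
      (by simpa using hξneg) y hy
    simpa using this
  -- g' > 0 on (0, r_o)
  have hg'pos : ∀ y ∈ Ioo 0 r_o, 0 < deriv g y := by
    obtain ⟨ξ, hξ, hξeq⟩ := exists_hasDerivAt_eq_slope g (deriv g) hro0
      hgcont.continuousOn (fun x _ => (hgdiff x).hasDerivAt)
    have hξpos : 0 < deriv g ξ := by
      rw [hξeq, hg0]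
      exact div_pos (by simpa using hgpos r_o ⟨hro0, hroR⟩) (by simpa using hro0)
    exact pos_on_Ioo hg'cont
      (fun y hy => hg'ne y ⟨hy.1, hy.2.trans hroR⟩ (ne_of_lt hy.2)) hξ hξpos
  -- g < g r_o on (r_o, R)
  have hglt : ∀ w ∈ Ioo r_o R, g w < g r_o := by
    intro w hw
    rcases lt_or_eq_of_le (hgmax w ⟨hro0.trans hw.1, hw.2⟩) with h' | h'
    · exact h'
    · exfalso
      have hmax : IsLocalMax g w := by
        filter_upwards [IsOpen.mem_nhds isOpen_Ioo (⟨hro0.trans hw.1, hw.2⟩ :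
          w ∈ Ioo (0:ℝ) R)] with y hy
        rw [hg_eq w, h']
        exact hgmax y hy
      exact hg'ne w ⟨hro0.trans hw.1, hw.2⟩ (ne_of_gt hw.1) hmax.deriv_eq_zero
  -- g' < 0 on (r_o, R)
  have hg'neg : ∀ y ∈ Ioo r_o R, deriv g y < 0 := by
    have hwmem : (r_o + R) / 2 ∈ Ioo r_o R := ⟨by linarith, by linarith⟩
    obtain ⟨ξ, hξ, hξeq⟩ := exists_hasDerivAt_eq_slope g (deriv g) hwmem.1
      hgcont.continuousOn (fun x _ => (hgdiff x).hasDerivAt)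
    have hξneg : deriv g ξ < 0 := by
      rw [hξeq]
      apply div_neg_of_neg_of_pos
      · linarith [hglt _ hwmem]
      · linarith [hwmem.1]
    have hξ' : ξ ∈ Ioo r_o R := ⟨hξ.1, hξ.2.trans hwmem.2⟩
    intro y hy
    have := pos_on_Ioo (F := fun y => -deriv g y) hg'cont.neg
      (fun y hy => by
        simpa using hg'ne y ⟨hro0.trans hy.1, hy.2⟩ (ne_of_gt hy.1)) hξ'
      (by simpa using hξneg) y hy
    simpa using this
  -- monotonicity
  have hψmono : StrictMonoOn ψ (Icc 0 z_o) := by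
    apply strictMonoOn_of_deriv_pos (convex_Icc 0 z_o) hψcont.continuousOn
    intro x hx; rw [interior_Icc] at hx; exact hψ'pos x hx
  have hψanti : AntitoneOn ψ (Icc z_o H) := by
    apply antitoneOn_of_deriv_nonpos (convex_Icc z_o H) hψcont.continuousOn
      (hψdiff.differentiableOn)
    intro x hx; rw [interior_Icc] at hx; exact (hψ'neg x hx).le
  have hgmono : StrictMonoOn g (Icc 0 r_o) := by
    apply strictMonoOn_of_deriv_pos (convex_Icc 0 r_o) hgcont.continuousOn
    intro x hx; rw [interior_Icc] at hx; exact hg'pos x hx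
  -- choice of h_o
  set a : ℝ := r_o / 2 with ha_def
  have ha0 : 0 < a := by rw [ha_def]; linarith
  have haro : a < r_o := by rw [ha_def]; linarith
  have hga : 0 < g a := hgpos a ⟨ha0, haro.trans hroR⟩
  have hgro : 0 < g r_o := hgpos r_o ⟨hro0, hroR⟩
  have hψh : 0 < ψ h := hψpos h ⟨hh0, hhH⟩
  have hψzopos : 0 < ψ z_o := hψpos z_o ⟨hzo0, hzoH⟩
  set γ : ℝ := ψ h * g a / g r_o with hγ_def
  have hγpos : 0 < γ := by positivity
  have htend : Tendsto ψ (𝓝 0) (𝓝 0) := by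
    have := hψcont.tendsto 0
    rwa [hψ0] at this
  obtain ⟨d, hd0, hball⟩ := Metric.mem_nhds_iff.mp (htend (Iio_mem_nhds hγpos))
  set h_o : ℝ := min (min h z_o / 2) (d / 2) with ho_def
  have hho0 : 0 < h_o := by
    apply lt_min
    · have : 0 < min h z_o := lt_min hh0 hzo0
      linarith
    · linarith
  have hhoh : h_o ≤ h := by
    have h1 : h_o ≤ min h z_o / 2 := min_le_left _ _
    have h2 : min h z_o ≤ h := min_le_left _ _
    have : 0 < min h z_o := lt_min hh0 hzo0
    linarith
  have hhozo : h_o < z_o := by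
    have h1 : h_o ≤ min h z_o / 2 := min_le_left _ _
    have h2 : min h z_o ≤ z_o := min_le_right _ _
    have : 0 < min h z_o := lt_min hh0 hzo0
    linarith
  have hψho : ψ h_o < γ := by
    have : h_o ∈ Metric.ball (0:ℝ) d := by
      rw [Metric.mem_ball, Real.dist_eq, sub_zero, abs_of_pos hho0]
      have : h_o ≤ d / 2 := min_le_right _ _
      linarith
    exact hball this
  refine ⟨h_o, ⟨hho0, hhoh⟩, ?_⟩
  intro δ hδ0 hδR hδh c hcurve htrap
  by_contra hz0lt
  push_neg at hz0lt
  obtain ⟨hcpos, hcderiv⟩ := hcurve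
  set r : ℝ → ℝ := fun t => (c t).1 with hr_def
  set z : ℝ → ℝ := fun t => (c t).2 with hz_def
  have hrmem : ∀ t ∈ Ici (0:ℝ), r t ∈ Icc δ (R - δ) :=
    fun t ht => (Set.mem_prod.mp (htrap t ht)).1
  have hzmem : ∀ t ∈ Ici (0:ℝ), z t ∈ Icc δ h :=
    fun t ht => (Set.mem_prod.mp (htrap t ht)).2
  have hrpos : ∀ t ∈ Ici (0:ℝ), 0 < r t := fun t ht => lt_of_lt_of_le hδ0 (hrmem t ht).1
  have hrIoo : ∀ t ∈ Ici (0:ℝ), r t ∈ Ioo 0 R := by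
    intro t ht
    exact ⟨hrpos t ht, lt_of_le_of_lt (hrmem t ht).2 (by linarith)⟩
  have hzIoo : ∀ t ∈ Ici (0:ℝ), z t ∈ Ioo 0 H := by
    intro t ht
    exact ⟨lt_of_lt_of_le hδ0 (hzmem t ht).1, lt_of_le_of_lt (hzmem t ht).2 hhH⟩
  have hψzpos : ∀ t ∈ Ici (0:ℝ), 0 < ψ (z t) := fun t ht => hψpos _ (hzIoo t ht)
  -- component derivatives
  have hr' : ∀ t ∈ Ici (0:ℝ),
      HasDerivWithinAt r (-(φ (r t) * deriv ψ (z t))) (Ici 0) t := by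
    intro t ht
    have := (ContinuousLinearMap.fst ℝ ℝ ℝ).hasFDerivAt.comp_hasDerivWithinAt t
      (hcderiv t ht)
    exact this
  have hz' : ∀ t ∈ Ici (0:ℝ),
      HasDerivWithinAt z (deriv g (r t) * ψ (z t) / r t) (Ici 0) t := by
    intro t ht
    have := (ContinuousLinearMap.snd ℝ ℝ ℝ).hasFDerivAt.comp_hasDerivWithinAt t
      (hcderiv t ht)
    exact this
  -- conservation of circulation
  have hkeyD : ∀ x ∈ Ici (0:ℝ),
      HasDerivWithinAt (fun s => g (r s) * ψ (z s)) 0 (Ici 0) x := by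
    intro x hx
    have hgr : HasDerivWithinAt (fun s => g (r s))
        (deriv g (r x) * -(φ (r x) * deriv ψ (z x))) (Ici 0) x :=
      ((hgdiff (r x)).hasDerivAt).comp_hasDerivWithinAt x (hr' x hx)
    have hψz : HasDerivWithinAt (fun s => ψ (z s))
        (deriv ψ (z x) * (deriv g (r x) * ψ (z x) / r x)) (Ici 0) x :=
      ((hψdiff (z x)).hasDerivAt).comp_hasDerivWithinAt x (hz' x hx)
    have hmul := hgr.mul hψz
    have hrx : r x ≠ 0 := ne_of_gt (hrpos x hx)
    have hval : deriv g (r x) * -(φ (r x) * deriv ψ (z x)) * ψ (z x) +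
        g (r x) * (deriv ψ (z x) * (deriv g (r x) * ψ (z x) / r x)) = 0 := by
      rw [hg_eq]
      field_simp
      ring
    rwa [hval] at hmul
  have hcons : ∀ t ∈ Ici (0:ℝ), g (r t) * ψ (z t) = g (r 0) * ψ (z 0) := by
    intro t ht
    have hsub : Icc (0:ℝ) t ⊆ Ici 0 := fun x hx => hx.1
    exact constant_of_has_deriv_right_zero
      (fun x hx => ((hkeyD x (hsub hx)).continuousWithinAt).mono hsub)
      (fun x hx => (hkeyD x hx.1).mono (Ici_subset_Ici.mpr hx.1))
      t ⟨ht, le_rfl⟩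
  set Γ₀ : ℝ := g (r 0) * ψ (z 0) with hΓ₀_def
  have h0mem : (0:ℝ) ∈ Ici (0:ℝ) := mem_Ici.mpr le_rfl
  -- the circulation bound
  have hΓ₀lt : Γ₀ < ψ h * g a := by
    have hz00 : 0 ≤ z 0 := le_of_lt (lt_of_lt_of_le hδ0 (hzmem 0 h0mem).1)
    have hz0a : ψ (z 0) < ψ h_o :=
      hψmono ⟨hz00, le_of_lt (lt_of_lt_of_le hz0lt hhozo.le)⟩
        ⟨hho0.le, hhozo.le⟩ hz0lt
    have hgr0 : g (r 0) ≤ g r_o := by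
      have := hgmax (r 0) (hrIoo 0 h0mem)
      rwa [← hg_eq (r 0), ← hg_eq r_o] at this
    have hgr0pos : 0 < g (r 0) := hgpos _ (hrIoo 0 h0mem)
    have hψz0pos : 0 < ψ (z 0) := hψzpos 0 h0mem
    have hγeq : g r_o * γ = ψ h * g a := by
      rw [hγ_def]; field_simp
    calc Γ₀ = g (r 0) * ψ (z 0) := rfl
      _ ≤ g r_o * ψ (z 0) := mul_le_mul_of_nonneg_right hgr0 hψz0pos.le
      _ < g r_o * ψ h_o := (mul_lt_mul_iff_right₀ hgro).mpr hz0a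
      _ < g r_o * γ := (mul_lt_mul_iff_right₀ hgro).mpr hψho
      _ = ψ h * g a := hγeq
  -- the key pointwise bound: above z_o forces small g
  have hkey : ∀ t ∈ Ici (0:ℝ), z_o ≤ z t → g (r t) < g a := by
    intro t ht hzt
    have hzth : z t ≤ h := (hzmem t ht).2
    have hψzt : ψ h ≤ ψ (z t) :=
      hψanti ⟨hzt, (hzth.trans hhH.le)⟩ ⟨hzt.trans hzth, hhH.le⟩ hzth
    have hψztpos : 0 < ψ (z t) := hψzpos t ht
    have hΓt : g (r t) * ψ (z t) = Γ₀ := hcons t ht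
    have h1 : g (r t) * ψ (z t) < g a * ψ (z t) := by
      have h2 : ψ h * g a ≤ ψ (z t) * g a := mul_le_mul_of_nonneg_right hψzt hga.le
      calc g (r t) * ψ (z t) = Γ₀ := hΓt
        _ < ψ h * g a := hΓ₀lt
        _ ≤ ψ (z t) * g a := h2
        _ = g a * ψ (z t) := by ring
    exact lt_of_mul_lt_mul_right h1 hψztpos.le
  have hlow : ∀ t ∈ Ici (0:ℝ), z_o ≤ z t → r t ≤ r_o → r t < a := by
    intro t ht hzt hrt
    by_contra hge
    push_neg at hge
    have := hgmono.monotoneOn ⟨ha0.le, haro.le⟩ ⟨(hrpos t ht).le, hrt⟩ hge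
    exact absurd (hkey t ht hzt) (not_lt.mpr this)
  -- no double convergence
  have hCONV : ∀ rl zl : ℝ, Tendsto r atTop (𝓝 rl) → Tendsto z atTop (𝓝 zl) → False := by
    intro rl zl hrl hzl
    have hevge : ∀ᶠ t in atTop, t ∈ Ici (0:ℝ) := eventually_ge_atTop 0
    have hrl_mem : rl ∈ Icc δ (R - δ) := by
      constructor
      · exact ge_of_tendsto hrl (by filter_upwards [hevge] with t ht; exact (hrmem t ht).1)
      · exact le_of_tendsto hrl (by filter_upwards [hevge] with t ht; exact (hrmem t ht).2)
    have hzl_mem : zl ∈ Icc δ h := by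
      constructor
      · exact ge_of_tendsto hzl (by filter_upwards [hevge] with t ht; exact (hzmem t ht).1)
      · exact le_of_tendsto hzl (by filter_upwards [hevge] with t ht; exact (hzmem t ht).2)
    have hrlIoo : rl ∈ Ioo 0 R := ⟨lt_of_lt_of_le hδ0 hrl_mem.1, lt_of_le_of_lt hrl_mem.2 (by linarith)⟩
    have hzlIoo : zl ∈ Ioo 0 H := ⟨lt_of_lt_of_le hδ0 hzl_mem.1, lt_of_le_of_lt hzl_mem.2 hhH⟩
    have hrl0 : rl ≠ 0 := ne_of_gt hrlIoo.1
    -- a vector-field component with a nonzero limit forces escape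
    have main0 : ∀ (w df : ℝ → ℝ) (lo hi L : ℝ),
        (∀ t ∈ Ici (0:ℝ), HasDerivWithinAt w (df t) (Ici 0) t) →
        (∀ t ∈ Ici (0:ℝ), lo ≤ w t ∧ w t ≤ hi) →
        Tendsto df atTop (𝓝 L) → L = 0 := by
      intro w df lo hi L hw hbound hL
      by_contra hL0
      rcases lt_or_gt_of_ne hL0 with hneg | hpos
      · obtain ⟨T₀, hT₀⟩ := eventually_atTop.mp (hL.eventually (eventually_le_nhds (by linarith : L < L/2)))
        set T := max T₀ 0 with hT_def
        have hT0 : (0:ℝ) ≤ T := le_max_right _ _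
        refine escape_down (f := w) (df := df) (T := T) (ε := -(L/2)) (m := lo) (by linarith) ?_ ?_ ?_
        · intro t ht
          exact (hw t (mem_Ici.mpr (hT0.trans ht))).mono (Ici_subset_Ici.mpr hT0)
        · intro t ht
          have := hT₀ t ((le_max_left _ _).trans ht)
          linarith
        · intro t ht
          exact (hbound t (mem_Ici.mpr (hT0.trans ht))).1
      · obtain ⟨T₀, hT₀⟩ := eventually_atTop.mp (hL.eventually (eventually_ge_nhds (by linarith : L/2 < L)))
        set T := max T₀ 0 with hT_def
        have hT0 : (0:ℝ) ≤ T := le_max_right _ _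
        refine escape_up (f := w) (df := df) (T := T) (ε := L/2) (M := hi) (by linarith) ?_ ?_ ?_
        · intro t ht
          exact (hw t (mem_Ici.mpr (hT0.trans ht))).mono (Ici_subset_Ici.mpr hT0)
        · intro t ht
          exact hT₀ t ((le_max_left _ _).trans ht)
        · intro t ht
          exact (hbound t (mem_Ici.mpr (hT0.trans ht))).2
    have hfr : Tendsto (fun t => -(φ (r t) * deriv ψ (z t))) atTop
        (𝓝 (-(φ rl * deriv ψ zl))) :=
      (((hφcont.tendsto rl).comp hrl).mul ((hψ'cont.tendsto zl).comp hzl)).neg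
    have hfz : Tendsto (fun t => deriv g (r t) * ψ (z t) / r t) atTop
        (𝓝 (deriv g rl * ψ zl / rl)) :=
      ((((hg'cont.tendsto rl).comp hrl).mul ((hψcont.tendsto zl).comp hzl)).div hrl hrl0)
    have hr0 : -(φ rl * deriv ψ zl) = 0 :=
      main0 r _ δ (R - δ) _ hr' (fun t ht => ⟨(hrmem t ht).1, (hrmem t ht).2⟩) hfr
    have hz0 : deriv g rl * ψ zl / rl = 0 :=
      main0 z _ δ h _ hz' (fun t ht => ⟨(hzmem t ht).1, (hzmem t ht).2⟩) hfz
    -- so the limit is the interior stagnation point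
    have hψ'zl : deriv ψ zl = 0 := by
      have hφrl : 0 < φ rl := hφpos rl hrlIoo
      have := neg_eq_zero.mp hr0
      rcases mul_eq_zero.mp this with h' | h'
      · exact absurd h' (ne_of_gt hφrl)
      · exact h'
    have hzlzo : zl = z_o := by
      by_contra hne
      exact hψ'ne zl hzlIoo hne hψ'zl
    have hg'rl : deriv g rl = 0 := by
      have := (div_eq_zero_iff.mp hz0).resolve_right hrl0
      rcases mul_eq_zero.mp this with h' | h'
      · exact h'
      · exact absurd h' (ne_of_gt (hψpos zl hzlIoo))
    have hrlro : rl = r_o := by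
      by_contra hne
      exact hg'ne rl hrlIoo hne hg'rl
    -- circulation contradiction
    have hΓlim : Tendsto (fun t => g (r t) * ψ (z t)) atTop (𝓝 (g rl * ψ zl)) :=
      ((hgcont.tendsto rl).comp hrl).mul ((hψcont.tendsto zl).comp hzl)
    have hΓconst : Tendsto (fun t => g (r t) * ψ (z t)) atTop (𝓝 Γ₀) := by
      refine tendsto_const_nhds.congr' ?_
      filter_upwards [hevge] with t ht
      exact (hcons t ht).symm
    have hΓeq : Γ₀ = g rl * ψ zl := tendsto_nhds_unique hΓconst hΓlim
    rw [hrlro, hzlzo] at hΓeq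
    -- but Γ₀ < g r_o * ψ z_o
    have hz00 : 0 ≤ z 0 := le_of_lt (lt_of_lt_of_le hδ0 (hzmem 0 h0mem).1)
    have hz0zo : z 0 < z_o := lt_of_lt_of_le hz0lt hhozo.le
    have hψz0zo : ψ (z 0) < ψ z_o :=
      hψmono ⟨hz00, hz0zo.le⟩ ⟨hzo0.le, le_rfl⟩ hz0zo
    have hgr0 : g (r 0) ≤ g r_o := by
      have := hgmax (r 0) (hrIoo 0 h0mem)
      rwa [← hg_eq (r 0), ← hg_eq r_o] at this
    have h1 : Γ₀ < g r_o * ψ z_o :=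
      calc Γ₀ = g (r 0) * ψ (z 0) := rfl
        _ ≤ g r_o * ψ (z 0) := mul_le_mul_of_nonneg_right hgr0 (hψzpos 0 h0mem).le
        _ < g r_o * ψ z_o := (mul_lt_mul_iff_right₀ hgro).mpr hψz0zo
    rw [← hΓeq] at h1
    exact lt_irrefl _ h1
  -- Lemma A: the curve cannot stay weakly below z_o forever
  have hLemA : ∀ T, 0 ≤ T → (∀ t, T ≤ t → z t ≤ z_o) → False := by
    intro T hT hbelow
    have hψ'nonneg : ∀ t, T ≤ t → 0 ≤ deriv ψ (z t) := by
      intro t ht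
      have htmem : t ∈ Ici (0:ℝ) := mem_Ici.mpr (hT.trans ht)
      rcases eq_or_lt_of_le (hbelow t ht) with he | hl
      · rw [he, hψ'zo]
      · exact (hψ'pos (z t) ⟨(hzIoo t htmem).1, hl⟩).le
    have hranti : AntitoneOn r (Ici T) := by
      apply antiOn_of_field (convex_Ici T) (by rw [interior_Ici]; exact fun x hx => lt_of_le_of_lt hT hx) (fun x hx => hT.trans hx) hr'
      intro x hx
      rw [interior_Ici] at hx
      have hxmem : x ∈ Ici (0:ℝ) := mem_Ici.mpr (hT.trans hx.le)
      have h1 : 0 ≤ φ (r x) := (hφpos _ (hrIoo x hxmem)).le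
      have h2 : 0 ≤ deriv ψ (z x) := hψ'nonneg x hx.le
      simp only [neg_nonpos]
      exact mul_nonneg h1 h2
    by_cases hcase : ∃ T₁, T ≤ T₁ ∧ r T₁ < r_o
    · obtain ⟨T₁, hTT₁, hrT₁⟩ := hcase
      have hT₁0 : (0:ℝ) ≤ T₁ := hT.trans hTT₁
      have hrlt : ∀ t, T₁ ≤ t → r t < r_o := fun t ht =>
        lt_of_le_of_lt (hranti (mem_Ici.mpr hTT₁) (mem_Ici.mpr (hTT₁.trans ht)) ht) hrT₁
      have hzmono : MonotoneOn z (Ici T₁) := by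
        apply monoOn_of_field (convex_Ici T₁) (by rw [interior_Ici]; exact fun x hx => lt_of_le_of_lt hT₁0 hx) (fun x hx => hT₁0.trans hx) hz'
        intro x hx
        rw [interior_Ici] at hx
        have hxmem : x ∈ Ici (0:ℝ) := mem_Ici.mpr (hT₁0.trans hx.le)
        have h1 : 0 < deriv g (r x) := hg'pos _ ⟨hrpos x hxmem, hrlt x hx.le⟩
        exact le_of_lt (div_pos (mul_pos h1 (hψzpos x hxmem)) (hrpos x hxmem))
      obtain ⟨zl, hzl⟩ := tendsto_of_monotoneOn hzmono
        (fun t ht => (hzmem t (mem_Ici.mpr (hT₁0.trans ht))).2)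
      obtain ⟨rl, hrl⟩ := tendsto_of_antitoneOn (hranti.mono (Ici_subset_Ici.mpr hTT₁))
        (fun t ht => (hrmem t (mem_Ici.mpr (hT₁0.trans ht))).1)
      exact hCONV rl zl hrl hzl
    · push_neg at hcase
      have hzanti : AntitoneOn z (Ici T) := by
        apply antiOn_of_field (convex_Ici T) (by rw [interior_Ici]; exact fun x hx => lt_of_le_of_lt hT hx) (fun x hx => hT.trans hx) hz'
        intro x hx
        rw [interior_Ici] at hx
        have hxmem : x ∈ Ici (0:ℝ) := mem_Ici.mpr (hT.trans hx.le)
        have h1 : deriv g (r x) ≤ 0 := by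
          rcases eq_or_lt_of_le (hcase x hx.le) with he | hl
          · rw [← he, hg'ro]
          · exact (hg'neg _ ⟨hl, (hrIoo x hxmem).2⟩).le
        have h2 : 0 < ψ (z x) := hψzpos x hxmem
        have h3 : 0 < r x := hrpos x hxmem
        exact div_nonpos_of_nonpos_of_nonneg (mul_nonpos_of_nonpos_of_nonneg h1 h2.le) h3.le
      obtain ⟨zl, hzl⟩ := tendsto_of_antitoneOn hzanti
        (fun t ht => (hzmem t (mem_Ici.mpr (hT.trans ht))).1)
      obtain ⟨rl, hrl⟩ := tendsto_of_antitoneOn hranti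
        (fun t ht => (hrmem t (mem_Ici.mpr (hT.trans ht))).1)
      exact hCONV rl zl hrl hzl
  by_cases hex : ∃ T₁, 0 ≤ T₁ ∧ z_o ≤ z T₁ ∧ r T₁ < a
  · obtain ⟨T₁, hT₁0, hzT₁, hrT₁⟩ := hex
    have hδa : δ < a := lt_of_le_of_lt (hrmem T₁ (mem_Ici.mpr hT₁0)).1 hrT₁
    have hzoh : z_o ≤ h := le_trans hzT₁ (hzmem T₁ (mem_Ici.mpr hT₁0)).2
    -- invariance of the good region {z ≥ z_o, r < a}
    have hinv : ∀ t, T₁ ≤ t → z_o ≤ z t ∧ r t < a := by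
      by_contra hbad
      push_neg at hbad
      set B := {t : ℝ | T₁ ≤ t ∧ ¬(z_o ≤ z t ∧ r t < a)} with hB_def
      have hBne : B.Nonempty := by
        obtain ⟨t, ht1, ht2⟩ := hbad
        exact ⟨t, ht1, fun hc => absurd hc.2 (not_lt.mpr (ht2 hc.1))⟩
      have hBbdd : BddBelow B := ⟨T₁, fun x hx => hx.1⟩
      set τ := sInf B with hτ_def
      have hτT₁ : T₁ ≤ τ := le_csInf hBne (fun x hx => hx.1)
      have hτ0 : (0:ℝ) ≤ τ := hT₁0.trans hτT₁
      have hτmem : τ ∈ Ici (0:ℝ) := mem_Ici.mpr hτ0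
      have hgood : ∀ s, T₁ ≤ s → s < τ → z_o ≤ z s ∧ r s < a := by
        intro s hs1 hs2
        by_contra hb
        exact absurd (csInf_le hBbdd ⟨hs1, hb⟩) (not_le.mpr hs2)
      have hgoodτ : z_o ≤ z τ ∧ r τ ≤ a := by
        rcases eq_or_lt_of_le hτT₁ with he | hlt
        · rw [← he]; exact ⟨hzT₁, hrT₁.le⟩
        · have hne : (𝓝[Ico T₁ τ] τ).NeBot := by
            rw [← mem_closure_iff_nhdsWithin_neBot, closure_Ico (ne_of_lt hlt)]
            exact ⟨hlt.le, le_rfl⟩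
          have hzc : ContinuousWithinAt z (Ico T₁ τ) τ :=
            ((hz' τ hτmem).continuousWithinAt).mono
              (fun x hx => mem_Ici.mpr (hT₁0.trans hx.1))
          have hrc : ContinuousWithinAt r (Ico T₁ τ) τ :=
            ((hr' τ hτmem).continuousWithinAt).mono
              (fun x hx => mem_Ici.mpr (hT₁0.trans hx.1))
          constructor
          · exact ge_of_tendsto hzc (eventually_mem_nhdsWithin.mono
              (fun s hs => (hgood s hs.1 hs.2).1))
          · exact le_of_tendsto hrc (eventually_mem_nhdsWithin.mono
              (fun s hs => (hgood s hs.1 hs.2).2.le))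
      obtain ⟨hzτ, hrτa⟩ := hgoodτ
      have hgra : g (r τ) < g a := hkey τ hτmem hzτ
      have hrτ : r τ < a := by
        rcases eq_or_lt_of_le hrτa with he | hlt
        · rw [he] at hgra; exact absurd hgra (lt_irrefl _)
        · exact hlt
      have hevz : ∀ᶠ t in 𝓝[>] τ, z_o ≤ z t := by
        rcases eq_or_lt_of_le hzτ with he | hlt
        · have hd : 0 < deriv g (r τ) * ψ (z τ) / r τ := by
            have h1 : 0 < deriv g (r τ) :=
              hg'pos _ ⟨hrpos τ hτmem, hrτ.trans haro⟩
            exact div_pos (mul_pos h1 (hψzpos τ hτmem)) (hrpos τ hτmem)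
          have := eventually_gt_right hd
            ((hz' τ hτmem).mono (Ici_subset_Ici.mpr hτ0))
          filter_upwards [this] with t ht
          rw [he]; exact ht.le
        · have hzc : ContinuousWithinAt z (Ioi τ) τ :=
            ((hz' τ hτmem).continuousWithinAt).mono
              (fun x hx => mem_Ici.mpr (hτ0.trans (le_of_lt hx)))
          have := hzc (Ioi_mem_nhds hlt)
          filter_upwards [this] with t ht
          exact (le_of_lt ht)
      have hevr : ∀ᶠ t in 𝓝[>] τ, r t < a := by
        have hrc : ContinuousWithinAt r (Ioi τ) τ :=
          ((hr' τ hτmem).continuousWithinAt).mono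
            (fun x hx => mem_Ici.mpr (hτ0.trans (le_of_lt hx)))
        have := hrc (Iio_mem_nhds hrτ)
        filter_upwards [this] with t ht
        exact ht
      obtain ⟨u, hu, huP⟩ := mem_nhdsGT_iff_exists_Ioc_subset.mp (hevz.and hevr)
      have hlb : ∀ x ∈ B, u ≤ x := by
        intro x hx
        by_contra hxu
        push_neg at hxu
        rcases lt_trichotomy x τ with h1 | h1 | h1
        · exact hx.2 (hgood x hx.1 h1)
        · exact hx.2 (h1 ▸ ⟨hzτ, hrτ⟩)
        · exact hx.2 (huP ⟨h1, hxu.le⟩)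
      have hinf : u ≤ τ := le_csInf hBne hlb
      have : τ < u := mem_Ioi.mp hu
      linarith
    -- final escape: z increases at a uniform rate, contradicting z ≤ h
    have hIccne : (Icc δ a).Nonempty := ⟨δ, le_rfl, hδa.le⟩
    obtain ⟨x₀, hx₀mem, hx₀min⟩ :=
      isCompact_Icc.exists_isMinOn hIccne (hg'cont.continuousOn)
    have hm₀ : 0 < deriv g x₀ :=
      hg'pos _ ⟨lt_of_lt_of_le hδ0 hx₀mem.1, lt_of_le_of_lt hx₀mem.2 haro⟩
    set ε : ℝ := deriv g x₀ * ψ h / R with hε_def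
    have hεpos : 0 < ε := div_pos (mul_pos hm₀ hψh) hR
    apply escape_up (f := z) (df := fun t => deriv g (r t) * ψ (z t) / r t)
      (T := T₁) (ε := ε) (M := h) hεpos
    · intro t ht
      exact (hz' t (mem_Ici.mpr (hT₁0.trans ht))).mono (Ici_subset_Ici.mpr hT₁0)
    · intro t ht
      have htmem : t ∈ Ici (0:ℝ) := mem_Ici.mpr (hT₁0.trans ht)
      obtain ⟨hzgt, hrlt⟩ := hinv t ht
      have h1 : deriv g x₀ ≤ deriv g (r t) := hx₀min ⟨(hrmem t htmem).1, hrlt.le⟩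
      have h2 : ψ h ≤ ψ (z t) :=
        hψanti ⟨hzgt, ((hzmem t htmem).2).trans hhH.le⟩ ⟨hzoh, hhH.le⟩ (hzmem t htmem).2
      have h3 : 0 < r t := hrpos t htmem
      have h4 : r t ≤ R := le_trans (hrmem t htmem).2 (by linarith)
      rw [hε_def]
      exact div_le_div₀ (mul_nonneg (hm₀.le.trans h1) (hψh.le.trans h2))
        (mul_le_mul h1 h2 hψh.le (hm₀.le.trans h1)) h3 h4
    · intro t ht
      exact (hzmem t (mem_Ici.mpr (hT₁0.trans ht))).2
  · push_neg at hex
    have hinv2 : ∀ t, 0 ≤ t → z_o ≤ z t → r_o < r t := by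
      intro t ht hzt
      by_contra hle
      push_neg at hle
      exact absurd (hlow t (mem_Ici.mpr ht) hzt hle) (not_lt.mpr (hex t ht hzt))
    by_cases hcase2 : ∃ T, 0 ≤ T ∧ r T ≤ r_o
    · obtain ⟨T, hT, hrT⟩ := hcase2
      have hclaim : ∀ t, T ≤ t → z t ≤ z_o := by
        by_contra hcc
        push_neg at hcc
        set C := {t : ℝ | T ≤ t ∧ z_o ≤ z t} with hC_def
        have hCne : C.Nonempty := by
          obtain ⟨t, ht1, ht2⟩ := hcc
          exact ⟨t, ht1, ht2.le⟩
        have hCbdd : BddBelow C := ⟨T, fun x hx => hx.1⟩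
        set τ := sInf C with hτ_def
        have hτT : T ≤ τ := le_csInf hCne (fun x hx => hx.1)
        have hτ0 : (0:ℝ) ≤ τ := hT.trans hτT
        have hzT : z T < z_o := by
          by_contra hzT'
          push_neg at hzT'
          exact absurd (hinv2 T hT hzT') (not_lt.mpr hrT)
        obtain ⟨u, hu_anti, hu_tend, hu_mem⟩ := exists_seq_tendsto_sInf hCne hCbdd
        rw [← hτ_def] at hu_tend
        have hzτ_ge : z_o ≤ z τ := by
          have hcont : ContinuousWithinAt z (Ici 0) τ :=
            (hz' τ (mem_Ici.mpr hτ0)).continuousWithinAt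
          have hu' : Tendsto u atTop (𝓝[Ici 0] τ) :=
            tendsto_nhdsWithin_of_tendsto_nhds_of_eventually_within u hu_tend
              (Eventually.of_forall (fun n => mem_Ici.mpr (hT.trans (hu_mem n).1)))
          have htd : Tendsto (fun n => z (u n)) atTop (𝓝 (z τ)) := hcont.tendsto.comp hu'
          exact ge_of_tendsto htd (Eventually.of_forall (fun n => (hu_mem n).2))
        have hτT' : T < τ := lt_of_le_of_ne hτT (fun he => by rw [← he] at hzτ_ge; linarith)
        have hgoodz : ∀ s, T ≤ s → s < τ → z s < z_o := by
          intro s hs1 hs2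
          by_contra hb
          push_neg at hb
          exact absurd (csInf_le hCbdd ⟨hs1, hb⟩) (not_le.mpr hs2)
        have hrantiTτ : AntitoneOn r (Icc T τ) := by
          apply antiOn_of_field (convex_Icc T τ)
            (by rw [interior_Icc]; exact fun x hx => lt_of_le_of_lt hT hx.1)
            (fun x hx => hT.trans hx.1) hr'
          intro x hx
          rw [interior_Icc] at hx
          have hxmem : x ∈ Ici (0:ℝ) := mem_Ici.mpr (hT.trans hx.1.le)
          have h2 : 0 ≤ deriv ψ (z x) :=
            (hψ'pos (z x) ⟨(hzIoo x hxmem).1, hgoodz x hx.1.le hx.2⟩).le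
          simp only [neg_nonpos]
          exact mul_nonneg (hφpos _ (hrIoo x hxmem)).le h2
        have hrτ : r τ ≤ r_o := le_trans (hrantiTτ ⟨le_rfl, hτT⟩ ⟨hτT, le_rfl⟩ hτT) hrT
        exact absurd (hinv2 τ hτ0 hzτ_ge) (not_lt.mpr hrτ)
      exact hLemA T hT hclaim
    · push_neg at hcase2
      have hzanti : AntitoneOn z (Ici 0) := by
        apply antiOn_of_field (convex_Ici 0) (by rw [interior_Ici])
          (fun x hx => hx) hz'
        intro x hx
        rw [interior_Ici] at hx
        have hxmem : x ∈ Ici (0:ℝ) := mem_Ici.mpr (le_of_lt (mem_Ioi.mp hx))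
        have h1 : deriv g (r x) < 0 := hg'neg _ ⟨hcase2 x hxmem, (hrIoo x hxmem).2⟩
        exact le_of_lt (div_neg_of_neg_of_pos
          (mul_neg_of_neg_of_pos h1 (hψzpos x hxmem)) (hrpos x hxmem))
      by_cases hcase3 : ∃ T, 0 ≤ T ∧ z T < z_o
      · obtain ⟨T, hT, hzT⟩ := hcase3
        apply hLemA T hT
        intro t ht
        exact le_trans (hzanti (mem_Ici.mpr hT) (mem_Ici.mpr (hT.trans ht)) ht) hzT.le
      · push_neg at hcase3
        have hrmono : MonotoneOn r (Ici 0) := by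
          apply monoOn_of_field (convex_Ici 0) (by rw [interior_Ici])
            (fun x hx => hx) hr'
          intro x hx
          rw [interior_Ici] at hx
          have hxmem : x ∈ Ici (0:ℝ) := mem_Ici.mpr (le_of_lt (mem_Ioi.mp hx))
          have h2 : deriv ψ (z x) ≤ 0 := by
            rcases eq_or_lt_of_le (hcase3 x hxmem) with he | hl
            · rw [← he, hψ'zo]
            · exact (hψ'neg _ ⟨hl, (hzIoo x hxmem).2⟩).le
          have h1 : 0 ≤ φ (r x) := (hφpos _ (hrIoo x hxmem)).le
          simp only [neg_nonneg]
          exact mul_nonpos_of_nonneg_of_nonpos h1 h2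
        obtain ⟨rl, hrl⟩ := tendsto_of_monotoneOn hrmono (fun t ht => (hrmem t ht).2)
        obtain ⟨zl, hzl⟩ := tendsto_of_antitoneOn hzanti (fun t ht => (hzmem t ht).1)
        exact hCONV rl zl hrl hzl
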